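/- Let h > 0, w₂ > 0 (w₂ ≠ 1), w₁ > 0, and c > 0. Consider the four-point stencil {x − w₂h, x − h, x, x + w₁h} and the weights β_{-2}, β_{-1}, β_0, β_{+1} given by the closed-form expressions of Theorem 2 of the paper (e.g. β₀ = μ₂/(c²h²w₂w₁) with μ₂ = −w₂(2c² + h²(w₁−1)w₁ + h²) + (w₁−1)(2c² − h²w₁) + h²(w₁−1)w₂²). Then for every six-times continuously differentiable f, the error β_{-2}f(x−w₂h) + β_{-1}f(x−h) + β_0 f(x) + β_{+1}f(x+w₁h) − f''(x) equals [(w₂(w₁−1) + w₁)(c² f⁗(x) + 12 f''(x))/(12c²)] h² + O(h³) as h → 0. -/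

import Mathlib

open Filter Asymptotics Topology

/-- `μ₁` of Theorem 2. -/
noncomputable def mu1 (h c w2 w1 : ℝ) : ℝ :=
  -w1 * (2 * c ^ 2 + h ^ 2 * w2 * (w2 + 3) + 3 * h ^ 2)
    + w2 * (2 * c ^ 2 + h ^ 2 * w2 + 3 * h ^ 2) + h ^ 2 * (w2 + 1) * w1 ^ 2

/-- `μ₂` of Theorem 2. -/
noncomputable def mu2 (h c w2 w1 : ℝ) : ℝ :=
  -w2 * (2 * c ^ 2 + h ^ 2 * (w1 - 1) * w1 + h ^ 2)
    + (w1 - 1) * (2 * c ^ 2 - h ^ 2 * w1) + h ^ 2 * (w1 - 1) * w2 ^ 2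

/-- Gaussian RBF--FD second-derivative weight at the node `x - w₂ h`. -/
noncomputable def betam2 (h c w2 w1 : ℝ) : ℝ :=
  ((w1 - 1) * (2 * c ^ 2 - h ^ 2 * w1) + 3 * h ^ 2 * w2 ^ 2 * (w1 - 1)
      - h ^ 2 * w2 * ((w1 - 3) * w1 + 1))
    / (c ^ 2 * h ^ 2 * (w2 - 1) * w2 * (w2 + w1))

/-- Gaussian RBF--FD second-derivative weight at the node `x - h`. -/
noncomputable def betam1 (h c w2 w1 : ℝ) : ℝ :=
  mu1 h c w2 w1 / (c ^ 2 * h ^ 2 * (w2 - 1) * (w1 + 1))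

/-- Gaussian RBF--FD second-derivative weight at the center node `x`. -/
noncomputable def beta0 (h c w2 w1 : ℝ) : ℝ :=
  mu2 h c w2 w1 / (c ^ 2 * h ^ 2 * w2 * w1)

/-- Gaussian RBF--FD second-derivative weight at the node `x + w₁ h`. -/
noncomputable def betap1 (h c w2 w1 : ℝ) : ℝ :=
  ((w2 + 1) * (2 * c ^ 2 + h ^ 2 * w2) + 3 * h ^ 2 * (w2 + 1) * w1 ^ 2
      - h ^ 2 * (w2 * (w2 + 3) + 1) * w1)
    / (c ^ 2 * h ^ 2 * w1 * (w1 + 1) * (w2 + w1))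


lemma taylor_remainder_bigO (n : ℕ) : ∀ f : ℝ → ℝ, ContDiff ℝ (n + 1) f → ∀ x : ℝ,
    (fun t : ℝ => f (x + t) - ∑ k ∈ Finset.range (n + 1),
        iteratedDeriv k f x * t ^ k / (k.factorial : ℝ))
      =O[𝓝 (0 : ℝ)] fun t => t ^ (n + 1) := by
  induction n with
  | zero =>
    intro f hf x
    have hd : Differentiable ℝ f := hf.differentiable (by norm_num)
    have h1 : (fun y => f y - f x) =O[𝓝 x] fun y => y - x :=
      (hd x).hasFDerivAt.isBigO_sub
    have hcomp : Tendsto (fun t : ℝ => x + t) (𝓝 0) (𝓝 x) := by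
      simpa using ((continuous_id.tendsto (0 : ℝ)).const_add x)
    have h2 := h1.comp_tendsto hcomp
    simp only [Function.comp_def, add_sub_cancel_left] at h2
    simpa [Finset.sum_range_one] using h2
  | succ n ih =>
    intro f hf x
    have hf2 : ContDiff ℝ ((n + 1 : ℕ) + 1) f := by exact_mod_cast hf
    have hd : Differentiable ℝ f := hf2.differentiable (by norm_num)
    have hf' : ContDiff ℝ (n + 1) (deriv f) := (contDiff_succ_iff_deriv.mp hf2).2.2
    have IH := ih (deriv f) hf' x
    obtain ⟨C, hC0, hCW⟩ := IH.exists_pos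
    rw [isBigOWith_iff] at hCW
    obtain ⟨δ, hδ0, hδ⟩ := Metric.eventually_nhds_iff.mp hCW
    rw [isBigO_iff]
    refine ⟨C, ?_⟩
    filter_upwards [Metric.ball_mem_nhds (0 : ℝ) hδ0] with t ht
    -- the remainder function and its derivative
    have key : ∀ s : ℝ, HasDerivAt
        (fun u : ℝ => f (x + u) - ∑ k ∈ Finset.range (n + 1 + 1),
          iteratedDeriv k f x * u ^ k / (k.factorial : ℝ))
        (deriv f (x + s) - ∑ k ∈ Finset.range (n + 1),
          iteratedDeriv k (deriv f) x * s ^ k / (k.factorial : ℝ)) s := by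
      intro s
      have h1 : HasDerivAt (fun u : ℝ => f (x + u)) (deriv f (x + s)) s := by
        exact (by simpa using (HasDerivAt.comp s ((hd (x + s)).hasDerivAt) ((hasDerivAt_id s).const_add x)) : HasDerivAt (f ∘ HAdd.hAdd x) (deriv f (x + s)) s)
      have h3 : HasDerivAt (fun u : ℝ => ∑ k ∈ Finset.range (n + 1 + 1),
            iteratedDeriv k f x * u ^ k / (k.factorial : ℝ))
          (∑ k ∈ Finset.range (n + 1 + 1),
            iteratedDeriv k f x * ((k : ℝ) * s ^ (k - 1)) / (k.factorial : ℝ)) s := by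
        apply HasDerivAt.fun_sum
        intro k hk
        simpa [mul_div_assoc] using
          (((hasDerivAt_pow k s).const_mul (iteratedDeriv k f x)).div_const (k.factorial : ℝ))
      have heq : (∑ k ∈ Finset.range (n + 1 + 1),
            iteratedDeriv k f x * ((k : ℝ) * s ^ (k - 1)) / (k.factorial : ℝ))
          = ∑ k ∈ Finset.range (n + 1),
            iteratedDeriv k (deriv f) x * s ^ k / (k.factorial : ℝ) := by
        rw [Finset.sum_range_succ']
        simp only [Nat.cast_zero, zero_mul, mul_zero, zero_div, add_zero]
        refine Finset.sum_congr rfl fun i _ => ?_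
        rw [← iteratedDeriv_succ']
        have hfact : ((i + 1).factorial : ℝ) = ((i : ℝ) + 1) * (i.factorial : ℝ) := by
          rw [Nat.factorial_succ]; push_cast; ring
        rw [hfact]
        have h1 : (i.factorial : ℝ) ≠ 0 := Nat.cast_ne_zero.mpr (Nat.factorial_ne_zero i)
        have h2 : ((i : ℝ) + 1) ≠ 0 := by positivity
        field_simp
        push_cast [add_tsub_cancel_left, add_tsub_cancel_right]; ring
      rw [← heq]
      exact h1.sub h3
    have bound : ∀ s ∈ Set.uIcc (0 : ℝ) t,
        ‖deriv f (x + s) - ∑ k ∈ Finset.range (n + 1),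
          iteratedDeriv k (deriv f) x * s ^ k / (k.factorial : ℝ)‖ ≤ C * |t| ^ (n + 1) := by
      intro s hs
      have hst : |s| ≤ |t| := by
        rcases Set.mem_uIcc.mp hs with ⟨h1, h2⟩ | ⟨h1, h2⟩ <;>
          exact abs_le.mpr ⟨by linarith [neg_abs_le t, le_abs_self t],
            by linarith [neg_abs_le t, le_abs_self t]⟩
      have hsδ : dist s 0 < δ := by
        rw [Real.dist_eq, sub_zero]
        calc |s| ≤ |t| := hst
          _ < δ := by simpa [Real.dist_eq] using ht
      have := hδ hsδ
      calc ‖deriv f (x + s) - ∑ k ∈ Finset.range (n + 1),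
            iteratedDeriv k (deriv f) x * s ^ k / (k.factorial : ℝ)‖
          ≤ C * ‖s ^ (n + 1)‖ := this
        _ = C * |s| ^ (n + 1) := by rw [Real.norm_eq_abs, abs_pow]
        _ ≤ C * |t| ^ (n + 1) := by
            have h0s : (0:ℝ) ≤ |s| := abs_nonneg s
            have hCnn : 0 ≤ C := le_of_lt hC0
            exact mul_le_mul_of_nonneg_left (pow_le_pow_left₀ h0s hst _) hCnn
    have hmvt := (convex_uIcc (0 : ℝ) t).norm_image_sub_le_of_norm_hasDerivWithin_le
      (fun s _ => (key s).hasDerivWithinAt) bound Set.left_mem_uIcc Set.right_mem_uIcc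
    have h0 : f (x + 0) - ∑ k ∈ Finset.range (n + 1 + 1),
        iteratedDeriv k f x * (0:ℝ) ^ k / (k.factorial : ℝ) = 0 := by
      rw [Finset.sum_range_succ']
      simp [iteratedDeriv_zero]
    rw [h0, sub_zero, sub_zero] at hmvt
    calc ‖f (x + t) - ∑ k ∈ Finset.range (n + 1 + 1),
          iteratedDeriv k f x * t ^ k / (k.factorial : ℝ)‖
        ≤ C * |t| ^ (n + 1) * ‖t‖ := hmvt
      _ = C * ‖t ^ (n + 1 + 1)‖ := by
          rw [Real.norm_eq_abs, Real.norm_eq_abs, abs_pow, pow_succ]; ring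


lemma taylor6 (f : ℝ → ℝ) (hf : ContDiff ℝ 6 f) (x s : ℝ) :
    (fun h : ℝ => f (x + s * h) - ∑ k ∈ Finset.range 6,
        iteratedDeriv k f x * (s * h) ^ k / (k.factorial : ℝ))
      =O[𝓝 (0 : ℝ)] fun h => h ^ 6 := by
  have h1 := taylor_remainder_bigO 5 f (by exact_mod_cast hf) x
  have hs : Tendsto (fun h : ℝ => s * h) (𝓝 0) (𝓝 0) := by
    simpa using ((continuous_id.tendsto (0 : ℝ)).const_mul s)
  have h2 := h1.comp_tendsto hs
  simp only [Function.comp_def] at h2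
  have h3 : (fun h : ℝ => (s * h) ^ 6) =O[𝓝 (0 : ℝ)] fun h => h ^ 6 := by
    have he : (fun h : ℝ => (s * h) ^ 6) = fun h => s ^ 6 * h ^ 6 := by funext h; ring
    rw [he]
    exact (isBigO_refl (fun h : ℝ => h ^ 6) _).const_mul_left _
  norm_num at h2
  exact h2.trans h3

lemma pow_succ_bigO (m : ℕ) : (fun h : ℝ => h ^ (m + 1)) =O[𝓝 (0 : ℝ)] fun h : ℝ => h ^ m := by
  have h1 : (fun h : ℝ => h) =O[𝓝 (0 : ℝ)] fun _ => (1 : ℝ) :=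
    (continuous_id.tendsto (0 : ℝ)).isBigO_one ℝ
  have h2 := h1.mul (isBigO_refl (fun h : ℝ => h ^ m) (𝓝 (0 : ℝ)))
  simpa [pow_succ, mul_comm, one_mul] using h2

set_option maxHeartbeats 1000000 in
/-- Theorem 2: the four-point Gaussian RBF--FD approximation of the second derivative
on the non-uniform stencil `{x - w₂h, x - h, x, x + w₁h}` has error
`[(w₂(w₁-1)+w₁)(c² f⁗(x) + 12 f''(x))/(12c²)] h² + O(h³)` as `h → 0⁺`. -/
theorem rbf_fd_second_derivative_error
    (w1 w2 c : ℝ) (hw1 : 0 < w1) (hw2 : 0 < w2) (hw2' : w2 ≠ 1) (hc : 0 < c)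
    (f : ℝ → ℝ) (hf : ContDiff ℝ 6 f) (x : ℝ) :
    (fun h : ℝ =>
        betam2 h c w2 w1 * f (x - w2 * h) + betam1 h c w2 w1 * f (x - h)
          + beta0 h c w2 w1 * f x + betap1 h c w2 w1 * f (x + w1 * h)
          - iteratedDeriv 2 f x
          - (w2 * (w1 - 1) + w1) * (c ^ 2 * iteratedDeriv 4 f x + 12 * iteratedDeriv 2 f x)
              / (12 * c ^ 2) * h ^ 2)
      =O[𝓝[>] (0 : ℝ)] fun h : ℝ => h ^ 3 := by
  have hc0 : c ≠ 0 := ne_of_gt hc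
  have hw10 : w1 ≠ 0 := ne_of_gt hw1
  have hw20 : w2 ≠ 0 := ne_of_gt hw2
  have hw21 : w2 - 1 ≠ 0 := sub_ne_zero.mpr hw2'
  have hww : w2 + w1 ≠ 0 := by positivity
  have hw11 : w1 + 1 ≠ 0 := by positivity
  set r0 : ℝ := ((-60:ℝ) * w1 + (60:ℝ) * w1 ^ 2 + (60:ℝ) * w2 + (-140:ℝ) * w2 * w1 + (60:ℝ) * w2 * w1 ^ 2 + (60:ℝ) * w2 ^ 2 + (-60:ℝ) * w2 ^ 2 * w1) * iteratedDeriv 3 f x + ((-2:ℝ) * c ^ 2 * w1 + (2:ℝ) * c ^ 2 * w1 ^ 2 + (2:ℝ) * c ^ 2 * w2 + (-4:ℝ) * c ^ 2 * w2 * w1 + (2:ℝ) * c ^ 2 * w2 * w1 ^ 2 + (2:ℝ) * c ^ 2 * w2 ^ 2 + (-2:ℝ) * c ^ 2 * w2 ^ 2 * w1) * iteratedDeriv 5 f x with hr0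
  set r1 : ℝ := ((15:ℝ) * w1 + (-20:ℝ) * w1 ^ 2 + (15:ℝ) * w1 ^ 3 + (-15:ℝ) * w2 + (45:ℝ) * w2 * w1 + (-45:ℝ) * w2 * w1 ^ 2 + (15:ℝ) * w2 * w1 ^ 3 + (-20:ℝ) * w2 ^ 2 + (45:ℝ) * w2 ^ 2 * w1 + (-20:ℝ) * w2 ^ 2 * w1 ^ 2 + (-15:ℝ) * w2 ^ 3 + (15:ℝ) * w2 ^ 3 * w1) * iteratedDeriv 4 f x with hr1
  set r2 : ℝ := ((-3:ℝ) * w1 + (4:ℝ) * w1 ^ 2 + (-4:ℝ) * w1 ^ 3 + (3:ℝ) * w1 ^ 4 + (3:ℝ) * w2 + (-9:ℝ) * w2 * w1 + (11:ℝ) * w2 * w1 ^ 2 + (-9:ℝ) * w2 * w1 ^ 3 + (3:ℝ) * w2 * w1 ^ 4 + (4:ℝ) * w2 ^ 2 + (-11:ℝ) * w2 ^ 2 * w1 + (11:ℝ) * w2 ^ 2 * w1 ^ 2 + (-4:ℝ) * w2 ^ 2 * w1 ^ 3 + (4:ℝ) * w2 ^ 3 + (-9:ℝ) * w2 ^ 3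 * w1 + (4:ℝ) * w2 ^ 3 * w1 ^ 2 + (3:ℝ) * w2 ^ 4 + (-3:ℝ) * w2 ^ 4 * w1) * iteratedDeriv 5 f x with hr2
  -- remainder big-O facts
  have hRm2 := (taylor6 f hf x (-w2)).mono (nhdsWithin_le_nhds : 𝓝[>] (0:ℝ) ≤ 𝓝 0)
  have hRm1 := (taylor6 f hf x (-1)).mono (nhdsWithin_le_nhds : 𝓝[>] (0:ℝ) ≤ 𝓝 0)
  have hRp1 := (taylor6 f hf x w1).mono (nhdsWithin_le_nhds : 𝓝[>] (0:ℝ) ≤ 𝓝 0)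
  -- beta big-O facts
  have hBm2 : (fun h : ℝ => betam2 h c w2 w1) =O[𝓝[>] (0 : ℝ)] fun h => (h ^ 2)⁻¹ := by
    have hcont : Continuous (fun h : ℝ =>
        ((w1 - 1) * (2 * c ^ 2 - h ^ 2 * w1) + 3 * h ^ 2 * w2 ^ 2 * (w1 - 1)
          - h ^ 2 * w2 * ((w1 - 3) * w1 + 1)) / (c ^ 2 * (w2 - 1) * w2 * (w2 + w1))) := by
      fun_prop
    have h1 := (((hcont.tendsto 0).mono_left nhdsWithin_le_nhds).isBigO_one ℝ).mul
      (isBigO_refl (fun h : ℝ => (h ^ 2)⁻¹) (𝓝[>] (0 : ℝ)))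
    refine h1.congr' ?_ (by filter_upwards with h; simp)
    filter_upwards [self_mem_nhdsWithin] with h hh
    have hh0 : h ≠ 0 := ne_of_gt hh
    simp only [betam2]
    field_simp
  have hBm1 : (fun h : ℝ => betam1 h c w2 w1) =O[𝓝[>] (0 : ℝ)] fun h => (h ^ 2)⁻¹ := by
    have hcont : Continuous (fun h : ℝ =>
        (-w1 * (2 * c ^ 2 + h ^ 2 * w2 * (w2 + 3) + 3 * h ^ 2)
          + w2 * (2 * c ^ 2 + h ^ 2 * w2 + 3 * h ^ 2) + h ^ 2 * (w2 + 1) * w1 ^ 2)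
          / (c ^ 2 * (w2 - 1) * (w1 + 1))) := by
      fun_prop
    have h1 := (((hcont.tendsto 0).mono_left nhdsWithin_le_nhds).isBigO_one ℝ).mul
      (isBigO_refl (fun h : ℝ => (h ^ 2)⁻¹) (𝓝[>] (0 : ℝ)))
    refine h1.congr' ?_ (by filter_upwards with h; simp)
    filter_upwards [self_mem_nhdsWithin] with h hh
    have hh0 : h ≠ 0 := ne_of_gt hh
    simp only [betam1, mu1]
    field_simp
  have hBp1 : (fun h : ℝ => betap1 h c w2 w1) =O[𝓝[>] (0 : ℝ)] fun h => (h ^ 2)⁻¹ := by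
    have hcont : Continuous (fun h : ℝ =>
        ((w2 + 1) * (2 * c ^ 2 + h ^ 2 * w2) + 3 * h ^ 2 * (w2 + 1) * w1 ^ 2
          - h ^ 2 * (w2 * (w2 + 3) + 1) * w1) / (c ^ 2 * w1 * (w1 + 1) * (w2 + w1))) := by
      fun_prop
    have h1 := (((hcont.tendsto 0).mono_left nhdsWithin_le_nhds).isBigO_one ℝ).mul
      (isBigO_refl (fun h : ℝ => (h ^ 2)⁻¹) (𝓝[>] (0 : ℝ)))
    refine h1.congr' ?_ (by filter_upwards with h; simp)
    filter_upwards [self_mem_nhdsWithin] with h hh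
    have hh0 : h ≠ 0 := ne_of_gt hh
    simp only [betap1]
    field_simp
  -- product estimates
  have hpow43 : (fun h : ℝ => h ^ 4) =O[𝓝[>] (0 : ℝ)] fun h : ℝ => h ^ 3 :=
    (pow_succ_bigO 3).mono (nhdsWithin_le_nhds : 𝓝[>] (0:ℝ) ≤ 𝓝 0)
  have hinv : (fun h : ℝ => (h ^ 2)⁻¹ * h ^ 6) =ᶠ[𝓝[>] (0 : ℝ)] fun h : ℝ => h ^ 4 := by
    filter_upwards [self_mem_nhdsWithin] with h hh
    have hh0 : h ≠ 0 := ne_of_gt hh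
    field_simp
  have hprod2 := (((hBm2.mul hRm2).congr' EventuallyEq.rfl hinv).trans hpow43)
  have hprod1 := (((hBm1.mul hRm1).congr' EventuallyEq.rfl hinv).trans hpow43)
  have hprodp := (((hBp1.mul hRp1).congr' EventuallyEq.rfl hinv).trans hpow43)
  -- the polynomial tail
  have hQ : (fun h : ℝ => h ^ 3 * ((r0 + r1 * h + r2 * h ^ 2) / (120 * c ^ 2)))
      =O[𝓝[>] (0 : ℝ)] fun h : ℝ => h ^ 3 := by
    have hcont : Continuous (fun h : ℝ => (r0 + r1 * h + r2 * h ^ 2) / (120 * c ^ 2)) := by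
      fun_prop
    have h1 := (isBigO_refl (fun h : ℝ => h ^ 3) (𝓝[>] (0 : ℝ))).mul
      (((hcont.tendsto 0).mono_left nhdsWithin_le_nhds).isBigO_one ℝ)
    exact h1.congr' EventuallyEq.rfl (by filter_upwards with h; simp)
  have hsum := ((hprod2.add hprod1).add hprodp).add hQ
  refine hsum.congr' ?_ EventuallyEq.rfl
  filter_upwards [self_mem_nhdsWithin] with h hh
  have hh0 : h ≠ 0 := ne_of_gt hh
  have e2 : x + -w2 * h = x - w2 * h := by ring
  have e1 : x + -1 * h = x - h := by ring
  simp only [e2, e1, hr0, hr1, hr2, betam2, betam1, beta0, betap1, mu1, mu2,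
    Finset.sum_range_succ, Finset.sum_range_zero, iteratedDeriv_zero]
  generalize f (x - w2 * h) = y2
  generalize f (x - h) = y1
  generalize f (x + w1 * h) = yp
  generalize f x = y0
  generalize iteratedDeriv 1 f x = D1
  generalize iteratedDeriv 2 f x = D2
  generalize iteratedDeriv 3 f x = D3
  generalize iteratedDeriv 4 f x = D4
  generalize iteratedDeriv 5 f x = D5
  norm_num [Nat.factorial]
  field_simp
  ring
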